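/- arXiv:2206.07079 — 3 statements merged into one kernel-verified Lean document; each statement's English description precedes it below -/
import Mathlib

section
/- Let $(d_n)_{n\ge1}$ be a nonnegative square-summable sequence and $(x_n)_{n\ge1}$ positive with $x_m/x_n \le C\gamma^{-(n-m)}$ for $m \le n$ (with $C>0$, $\gamma>1$) and $x_n \ge c\beta^n$ for some $c>0$, $\beta>1$. Then $\sum_{n=1}^\infty \frac{d_n}{x_n^2}\Big(1 + \sum_{m=1}^{n-1} d_m x_m^2\Big) < \infty$. -/
open Finset

/-- Geometric tail bound. -/
private lemma ioo_geom_le {t : ℝ} (ht0 : 0 ≤ t) (ht1 : t < 1) (m N : ℕ) :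
    ∑ n ∈ Finset.Ioo m N, t ^ (n - m) ≤ (1 - t)⁻¹ := by
  rw [← Finset.Ico_add_one_left_eq_Ioo, Finset.sum_Ico_eq_sum_range]
  have hexp : ∀ k : ℕ, (m + 1 + k) - m = k + 1 := fun k => by omega
  calc ∑ k ∈ Finset.range (N - (m + 1)), t ^ ((m + 1 + k) - m)
      = ∑ k ∈ Finset.range (N - (m + 1)), t ^ (k + 1) := by
        refine Finset.sum_congr rfl fun k _ => by rw [hexp k]
    _ ≤ ∑ k ∈ Finset.range (N - (m + 1)), t ^ k :=
        Finset.sum_le_sum fun k _ => pow_le_pow_of_le_one ht0 ht1.le (Nat.le_succ k)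
    _ ≤ ∑' k : ℕ, t ^ k :=
        Summable.sum_le_tsum _ (fun i _ => pow_nonneg ht0 i) (summable_geometric_of_lt_one ht0 ht1)
    _ = (1 - t)⁻¹ := tsum_geometric_of_lt_one ht0 ht1

/-- Summability of the discrete convolution of an ℓ¹ sequence with a geometric kernel. -/
private lemma summable_conv {a : ℕ → ℝ} (ha0 : ∀ n, 0 ≤ a n) (ha : Summable a)
    {t : ℝ} (ht0 : 0 ≤ t) (ht1 : t < 1) :
    Summable (fun n => ∑ m ∈ Finset.range n, a m * t ^ (n - m)) := by
  apply summable_of_sum_range_le (c := (∑' n, a n) * (1 - t)⁻¹)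
  · intro n
    exact Finset.sum_nonneg fun m _ => mul_nonneg (ha0 m) (pow_nonneg ht0 _)
  · intro N
    have hswap : ∑ n ∈ Finset.range N, ∑ m ∈ Finset.range n, a m * t ^ (n - m)
        = ∑ m ∈ Finset.range N, ∑ n ∈ Finset.Ioo m N, a m * t ^ (n - m) :=
      Finset.sum_comm' (fun n m => by
        simp only [Finset.mem_range, Finset.mem_Ioo]; omega)
    rw [hswap]
    calc ∑ m ∈ Finset.range N, ∑ n ∈ Finset.Ioo m N, a m * t ^ (n - m)
        ≤ ∑ m ∈ Finset.range N, a m * (1 - t)⁻¹ := by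
          refine Finset.sum_le_sum fun m _ => ?_
          rw [← Finset.mul_sum]
          exact mul_le_mul_of_nonneg_left (ioo_geom_le ht0 ht1 m N) (ha0 m)
      _ = (∑ m ∈ Finset.range N, a m) * (1 - t)⁻¹ := by rw [Finset.sum_mul]
      _ ≤ (∑' n, a n) * (1 - t)⁻¹ := by
          have h1t : (0:ℝ) ≤ (1 - t)⁻¹ := inv_nonneg.mpr (by linarith)
          exact mul_le_mul_of_nonneg_right
            (Summable.sum_le_tsum _ (fun i _ => ha0 i) ha) h1t

private lemma range_geom_le {t : ℝ} (ht0 : 0 ≤ t) (ht1 : t < 1) (n : ℕ) :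
    ∑ m ∈ Finset.range n, t ^ (n - m) ≤ (1 - t)⁻¹ := by
  have h : ∑ m ∈ Finset.range n, t ^ (n - m) = ∑ j ∈ Finset.range n, t ^ (j + 1) := by
    rw [← Finset.sum_range_reflect]
    refine Finset.sum_congr rfl fun m hm => ?_
    rw [Finset.mem_range] at hm
    congr 1
    omega
  rw [h]
  calc ∑ j ∈ Finset.range n, t ^ (j + 1)
      ≤ ∑ j ∈ Finset.range n, t ^ j :=
        Finset.sum_le_sum fun k _ => pow_le_pow_of_le_one ht0 ht1.le (Nat.le_succ k)
    _ ≤ ∑' k : ℕ, t ^ k :=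
        Summable.sum_le_tsum _ (fun i _ => pow_nonneg ht0 i) (summable_geometric_of_lt_one ht0 ht1)
    _ = (1 - t)⁻¹ := tsum_geometric_of_lt_one ht0 ht1

set_option maxHeartbeats 1000000 in
/-- Summability of `κ_n = (d_n / x_n²)(1 + ∑_{m<n} d_m x_m²)` under geometric ratio
decay of `x_m/x_n` and exponential lower bound `x_n ≥ c β^n`. -/
theorem stmt_7 (d x : ℕ → ℝ) (C γ c β : ℝ) (hC : 0 < C) (hγ : 1 < γ)
    (hc : 0 < c) (hβ : 1 < β)
    (hd0 : ∀ n, 0 ≤ d n) (hd2 : Summable (fun n => d n ^ 2))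
    (hx0 : ∀ n, 0 < x n)
    (hratio : ∀ m n : ℕ, m ≤ n → x m / x n ≤ C * γ ^ (-((n : ℤ) - (m : ℤ))))
    (hgrowth : ∀ n : ℕ, c * β ^ n ≤ x n) :
    Summable (fun n : ℕ =>
      d n / x n ^ 2 * (1 + ∑ m ∈ Finset.range n, d m * x m ^ 2)) := by
  set t : ℝ := (γ⁻¹) ^ 2 with ht_def
  clear_value t
  have hγ0 : 0 < γ := lt_trans one_pos hγ
  have ht0 : 0 ≤ t := ht_def ▸ sq_nonneg _
  have ht1 : t < 1 := by
    rw [ht_def]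
    have : γ⁻¹ < 1 := inv_lt_one_of_one_lt₀ hγ
    have h0 : 0 < γ⁻¹ := inv_pos.mpr hγ0
    nlinarith
  set r : ℝ := (β⁻¹) ^ 2 with hr_def
  clear_value r
  have hβ0 : 0 < β := lt_trans one_pos hβ
  have hr0 : 0 ≤ r := hr_def ▸ sq_nonneg _
  have hr1 : r < 1 := by
    rw [hr_def]
    have : β⁻¹ < 1 := inv_lt_one_of_one_lt₀ hβ
    have h0 : 0 < β⁻¹ := inv_pos.mpr hβ0
    nlinarith
  -- squared ratio bound
  have hratio2 : ∀ m n : ℕ, m ≤ n → (x m)^2 / (x n)^2 ≤ C^2 * t ^ (n - m) := by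
    intro m n hmn
    have h1 : x m / x n ≤ C * γ ^ (-((n : ℤ) - (m : ℤ))) := hratio m n hmn
    have h2 : γ ^ (-((n : ℤ) - (m : ℤ))) = (γ⁻¹) ^ (n - m) := by
      have : ((n : ℤ) - (m : ℤ)) = ((n - m : ℕ) : ℤ) := by omega
      rw [this, zpow_neg, zpow_natCast, ← inv_pow]
    rw [h2] at h1
    have hpos : 0 ≤ x m / x n := le_of_lt (div_pos (hx0 m) (hx0 n))
    have := mul_self_le_mul_self hpos h1
    have hexp : (γ⁻¹ ^ (n - m)) * (γ⁻¹ ^ (n - m)) = t ^ (n - m) := by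
      rw [ht_def, ← pow_mul, two_mul, pow_add]
    calc (x m)^2 / (x n)^2 = (x m / x n) * (x m / x n) := by
          field_simp
      _ ≤ (C * γ⁻¹ ^ (n - m)) * (C * γ⁻¹ ^ (n - m)) := this
      _ = C^2 * t ^ (n - m) := by rw [← hexp]; ring
  -- bound d n / x n ^ 2
  have hinv : ∀ n : ℕ, (x n ^ 2)⁻¹ ≤ c⁻¹^2 * r ^ n := by
    intro n
    have hxn := hgrowth n
    have hcb : 0 < c * β ^ n := mul_pos hc (pow_pos hβ0 n)
    have hsq : (c * β ^ n)^2 ≤ (x n)^2 := by nlinarith [hx0 n]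
    have h1 : (x n ^ 2)⁻¹ ≤ ((c * β ^ n)^2)⁻¹ := by
      apply inv_anti₀ (by positivity) hsq
    have h2 : ((c * β ^ n)^2)⁻¹ = c⁻¹^2 * r ^ n := by
      rw [hr_def]
      field_simp
      rw [one_div, inv_pow, ← pow_mul, ← pow_mul, mul_comm n 2]
      exact (mul_inv_cancel₀ (by positivity)).symm
    rw [← h2]; exact h1
  -- the majorant
  set A2 : ℝ := c⁻¹^2 / 2 + C^2 / 2 * (1 - t)⁻¹ with hA2
  have hg : Summable (fun n : ℕ =>
      c⁻¹^2 / 2 * r ^ n + A2 * d n ^ 2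
        + C^2 / 2 * ∑ m ∈ Finset.range n, d m ^ 2 * t ^ (n - m)) := by
    refine Summable.add (Summable.add ?_ ?_) ?_
    · exact (summable_geometric_of_lt_one hr0 hr1).mul_left _
    · exact hd2.mul_left _
    · exact (summable_conv (fun n => sq_nonneg (d n)) hd2 ht0 ht1).mul_left _
  refine Summable.of_nonneg_of_le ?_ ?_ hg
  · intro n
    have hS : 0 ≤ ∑ m ∈ Finset.range n, d m * x m ^ 2 :=
      Finset.sum_nonneg fun m _ => mul_nonneg (hd0 m) (sq_nonneg _)
    have := hd0 n
    have := hx0 n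
    positivity
  · intro n
    have hxn2 : 0 < x n ^ 2 := pow_pos (hx0 n) 2
    have expand : d n / x n ^ 2 * (1 + ∑ m ∈ Finset.range n, d m * x m ^ 2)
        = d n / x n ^ 2 + ∑ m ∈ Finset.range n, d n * d m * (x m ^ 2 / x n ^ 2) := by
      rw [mul_add, mul_one, Finset.mul_sum]
      congr 1
      refine Finset.sum_congr rfl fun m _ => ?_
      field_simp
    rw [expand]
    have hbound1 : d n / x n ^ 2 ≤ c⁻¹^2 / 2 * r ^ n + c⁻¹^2 / 2 * d n ^ 2 := by
      have hdn : d n ≤ (1 + d n ^ 2) / 2 := by nlinarith [sq_nonneg (d n - 1)]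
      have h1 : d n / x n ^ 2 ≤ (1 + d n ^ 2) / 2 * ((x n ^ 2)⁻¹) := by
        rw [div_eq_mul_inv]
        exact mul_le_mul_of_nonneg_right hdn (inv_nonneg.mpr hxn2.le)
      have h2 : (1 + d n ^ 2) / 2 * ((x n ^ 2)⁻¹)
          ≤ (1 + d n ^ 2) / 2 * (c⁻¹^2 * r ^ n) := by
        apply mul_le_mul_of_nonneg_left (hinv n)
        nlinarith [sq_nonneg (d n)]
      have hrn1 : r ^ n ≤ 1 := pow_le_one₀ hr0 hr1.le
      have hrn0 : 0 ≤ r ^ n := pow_nonneg hr0 n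
      have hc2 : 0 ≤ c⁻¹^2 := sq_nonneg _
      nlinarith [mul_nonneg (mul_nonneg hc2 (sq_nonneg (d n))) (sub_nonneg.mpr hrn1)]
    have hbound2 : ∑ m ∈ Finset.range n, d n * d m * (x m ^ 2 / x n ^ 2)
        ≤ C^2 / 2 * (1 - t)⁻¹ * d n ^ 2
          + C^2 / 2 * ∑ m ∈ Finset.range n, d m ^ 2 * t ^ (n - m) := by
      have step : ∀ m ∈ Finset.range n, d n * d m * (x m ^ 2 / x n ^ 2)
          ≤ C^2 / 2 * (d n ^ 2 * t ^ (n - m)) + C^2 / 2 * (d m ^ 2 * t ^ (n - m)) := by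
        intro m hm
        have hmn : m ≤ n := le_of_lt (Finset.mem_range.mp hm)
        have hr2 := hratio2 m n hmn
        have hdd : d n * d m ≤ (d n ^ 2 + d m ^ 2) / 2 := by
          nlinarith [sq_nonneg (d n - d m)]
        have hdd0 : 0 ≤ d n * d m := mul_nonneg (hd0 n) (hd0 m)
        have hxx0 : 0 ≤ x m ^ 2 / x n ^ 2 := by positivity
        have htnm : 0 ≤ t ^ (n - m) := pow_nonneg ht0 _
        calc d n * d m * (x m ^ 2 / x n ^ 2)
            ≤ ((d n ^ 2 + d m ^ 2) / 2) * (C^2 * t ^ (n - m)) := by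
              apply mul_le_mul hdd hr2 hxx0
              nlinarith [sq_nonneg (d n), sq_nonneg (d m)]
          _ = C^2 / 2 * (d n ^ 2 * t ^ (n - m)) + C^2 / 2 * (d m ^ 2 * t ^ (n - m)) := by
              ring
      calc ∑ m ∈ Finset.range n, d n * d m * (x m ^ 2 / x n ^ 2)
          ≤ ∑ m ∈ Finset.range n,
              (C^2 / 2 * (d n ^ 2 * t ^ (n - m)) + C^2 / 2 * (d m ^ 2 * t ^ (n - m))) :=
            Finset.sum_le_sum step
        _ = C^2 / 2 * d n ^ 2 * (∑ m ∈ Finset.range n, t ^ (n - m))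
            + C^2 / 2 * ∑ m ∈ Finset.range n, d m ^ 2 * t ^ (n - m) := by
            rw [Finset.sum_add_distrib, Finset.mul_sum, Finset.mul_sum]
            congr 1
            exact Finset.sum_congr rfl fun m _ => by ring
        _ ≤ C^2 / 2 * (1 - t)⁻¹ * d n ^ 2
            + C^2 / 2 * ∑ m ∈ Finset.range n, d m ^ 2 * t ^ (n - m) := by
            refine add_le_add ?_ le_rfl
            have hsum : ∑ m ∈ Finset.range n, t ^ (n - m) ≤ (1 - t)⁻¹ :=
              range_geom_le ht0 ht1 n
            calc C^2 / 2 * d n ^ 2 * (∑ m ∈ Finset.range n, t ^ (n - m))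
                ≤ C^2 / 2 * d n ^ 2 * (1 - t)⁻¹ := by
                  apply mul_le_mul_of_nonneg_left hsum (by positivity)
              _ = C^2 / 2 * (1 - t)⁻¹ * d n ^ 2 := by ring
    calc d n / x n ^ 2 + ∑ m ∈ Finset.range n, d n * d m * (x m ^ 2 / x n ^ 2)
        ≤ (c⁻¹^2 / 2 * r ^ n + c⁻¹^2 / 2 * d n ^ 2)
          + (C^2 / 2 * (1 - t)⁻¹ * d n ^ 2
            + C^2 / 2 * ∑ m ∈ Finset.range n, d m ^ 2 * t ^ (n - m)) :=
          add_le_add hbound1 hbound2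
      _ = c⁻¹^2 / 2 * r ^ n + A2 * d n ^ 2
          + C^2 / 2 * ∑ m ∈ Finset.range n, d m ^ 2 * t ^ (n - m) := by
          rw [hA2]; ring
end

section
/- Let $(B_n)_{n \ge 0}$ be nonnegative reals with $B_n \le B_{n-1} + 2\alpha_n\sqrt{B_{n-1}} + \beta_n$ for all $n \ge 1$, where $\alpha_n, \beta_n \ge 0$. Then for every $n$, $\sqrt{B_n} \le \sqrt{B_0} + \sum_{m=1}^n \alpha_m + \big(\sum_{m=1}^n \beta_m\big)^{1/2}$. -/
/-- Kiselev–Last–Simon discrete inequality: if `B_n ≤ B_{n-1} + 2 α_n √(B_{n-1}) + β_n`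
with `α, β ≥ 0`, then `√(B_n) ≤ √(B_0) + ∑_{m=1}^n α_m + (∑_{m=1}^n β_m)^{1/2}`. -/
theorem stmt_15 (B α β : ℕ → ℝ)
    (hB0 : ∀ n, 0 ≤ B n) (hα0 : ∀ n, 0 ≤ α n) (hβ0 : ∀ n, 0 ≤ β n)
    (hrec : ∀ n : ℕ, B (n + 1) ≤ B n + 2 * α (n + 1) * Real.sqrt (B n) + β (n + 1)) :
    ∀ n : ℕ, Real.sqrt (B n) ≤
      Real.sqrt (B 0) + (∑ m ∈ Finset.Icc 1 n, α m) +
        Real.sqrt (∑ m ∈ Finset.Icc 1 n, β m) := by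
  intro n
  induction n with
  | zero => simp
  | succ n ih =>
    rw [Finset.sum_Icc_succ_top (by omega : 1 ≤ n + 1),
        Finset.sum_Icc_succ_top (by omega : 1 ≤ n + 1)]
    set A : ℝ := Real.sqrt (B 0) + ∑ m ∈ Finset.Icc 1 n, α m with hA
    set C : ℝ := ∑ m ∈ Finset.Icc 1 n, β m with hC
    have hCnn : 0 ≤ C := Finset.sum_nonneg fun i _ => hβ0 i
    have hAnn : 0 ≤ A := by
      have := Real.sqrt_nonneg (B 0)
      have := Finset.sum_nonneg (fun i (_ : i ∈ Finset.Icc 1 n) => hα0 i)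
      linarith
    have ha : 0 ≤ α (n + 1) := hα0 _
    have hb : 0 ≤ β (n + 1) := hβ0 _
    set A' : ℝ := A + α (n + 1) with hA'
    have hA'nn : 0 ≤ A' := by positivity
    have hsqBn : Real.sqrt (B n) ^ 2 = B n := Real.sq_sqrt (hB0 n)
    have hsBnn : 0 ≤ Real.sqrt (B n) := Real.sqrt_nonneg _
    have h1 : B (n + 1) ≤ (A' + Real.sqrt C) ^ 2 + β (n + 1) := by
      have h2 : B (n + 1) ≤ (Real.sqrt (B n) + α (n + 1)) ^ 2 + β (n + 1) := by
        have := hrec n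
        nlinarith
      have h3 : Real.sqrt (B n) + α (n + 1) ≤ A' + Real.sqrt C := by
        have := ih; linarith
      nlinarith [Real.sqrt_nonneg C]
    have h4 : (A' + Real.sqrt C) ^ 2 + β (n + 1) ≤ (A' + Real.sqrt (C + β (n + 1))) ^ 2 := by
      have hsC : Real.sqrt C ^ 2 = C := Real.sq_sqrt hCnn
      have hsCb : Real.sqrt (C + β (n + 1)) ^ 2 = C + β (n + 1) :=
        Real.sq_sqrt (by linarith)
      have hmono : Real.sqrt C ≤ Real.sqrt (C + β (n + 1)) :=
        Real.sqrt_le_sqrt (by linarith)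
      nlinarith
    calc Real.sqrt (B (n + 1)) ≤ Real.sqrt ((A' + Real.sqrt (C + β (n + 1))) ^ 2) :=
          Real.sqrt_le_sqrt (by linarith)
      _ = A' + Real.sqrt (C + β (n + 1)) :=
          Real.sqrt_sq (by positivity)
      _ = Real.sqrt (B 0) + (∑ m ∈ Finset.Icc 1 n, α m + α (n + 1)) +
            Real.sqrt (C + β (n + 1)) := by rw [hA', hA]; ring
end

section
/- Let $(x_n)_{n\ge1}$ be a positive increasing sequence with $x_n/x_{n+1} \to 0$ and $x_n \ge C\beta^n$ for some $C>0$, $\beta>1$, let $\Delta > 0$, and let $(R_n)_{n \ge 1}$ be positive reals with $R_n^2 \ge \exp(-2C'\sum_{m=1}^n d_m)$ for a bounded nonnegative sequence $(d_m)$. Then $(x_{n+1} - x_n - 2\Delta) R_n^2 \to \infty$ as $n \to \infty$. -/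
open Filter

/-- If `x_n` is positive increasing with `x_n / x_{n+1} → 0` and `x_n ≥ C β^n`, and
`R_n² ≥ exp(-2C' ∑_{m≤n} d_m)` with `d` bounded nonnegative, then
`(x_{n+1} - x_n - 2Δ) R_n² → ∞`. -/
theorem stmt_17 (x R d : ℕ → ℝ) (C β Δ C' M : ℝ)
    (hC : 0 < C) (hβ : 1 < β) (hΔ : 0 < Δ) (hC' : 0 ≤ C')
    (hx0 : ∀ n, 0 < x n) (hxmono : StrictMono x)
    (hxratio : Tendsto (fun n => x n / x (n + 1)) atTop (nhds 0))
    (hxgrowth : ∀ n : ℕ, C * β ^ n ≤ x n)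
    (hR0 : ∀ n, 0 < R n)
    (hd0 : ∀ n, 0 ≤ d n) (hdM : ∀ n, d n ≤ M)
    (hRlow : ∀ n : ℕ, Real.exp (-(2 * C' * ∑ m ∈ Finset.Icc 1 n, d m)) ≤ R n ^ 2) :
    Tendsto (fun n : ℕ => (x (n + 1) - x n - 2 * Δ) * R n ^ 2) atTop atTop := by
  set K := 2 * C' * max M 0 with hKdef
  have hK0 : 0 ≤ K := by positivity
  have hRlow' : ∀ n : ℕ, Real.exp (-(K * n)) ≤ R n ^ 2 := by
    intro n
    refine le_trans (Real.exp_le_exp.mpr ?_) (hRlow n)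
    have hsum : ∑ m ∈ Finset.Icc 1 n, d m ≤ n * max M 0 := by
      calc ∑ m ∈ Finset.Icc 1 n, d m ≤ ∑ m ∈ Finset.Icc 1 n, max M 0 :=
            Finset.sum_le_sum fun m _ => le_max_of_le_left (hdM m)
        _ = n * max M 0 := by
            rw [Finset.sum_const, Nat.card_Icc]
            simp
    have : 2 * C' * ∑ m ∈ Finset.Icc 1 n, d m ≤ K * n := by
      rw [hKdef]
      calc 2 * C' * ∑ m ∈ Finset.Icc 1 n, d m ≤ 2 * C' * (n * max M 0) :=
            mul_le_mul_of_nonneg_left hsum (by positivity)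
        _ = 2 * C' * max M 0 * n := by ring
    linarith
  have hb0 : 0 < Real.exp (-K) := Real.exp_pos _
  have hb1 : Real.exp (-K) ≤ 1 := Real.exp_le_one_iff.mpr (by linarith)
  -- x tends to infinity
  have hxtop : Tendsto x atTop atTop :=
    tendsto_atTop_mono hxgrowth
      (Tendsto.const_mul_atTop hC (tendsto_pow_atTop_atTop_of_one_lt hβ))
  have h8Δ : ∀ᶠ n in atTop, 8 * Δ ≤ x (n + 1) :=
    ((hxtop.comp (tendsto_add_atTop_nat 1)).eventually_ge_atTop (8 * Δ))
  have hratio : ∀ᶠ n in atTop, x n < x (n + 1) * (Real.exp (-K) / 2) := by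
    filter_upwards [hxratio.eventually_lt_const (show (0:ℝ) < Real.exp (-K) / 2 by positivity)]
      with n hn
    have := (div_lt_iff₀ (hx0 (n + 1))).mp hn
    linarith [this]
  obtain ⟨N, hN⟩ := ((h8Δ.and hratio)).exists_forall_of_atTop
  have hc0 : 0 < x (N + 1) * Real.exp (-(K * N)) := mul_pos (hx0 _) (Real.exp_pos _)
  set c := x (N + 1) * Real.exp (-(K * N)) with hcdef
  have key : ∀ k : ℕ, c * 2 ^ k ≤ x (N + k + 1) * Real.exp (-(K * ((N + k : ℕ) : ℝ))) := by
    intro k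
    induction k with
    | zero => simp [hcdef]
    | succ k ih =>
      have hstep := (hN (N + k + 1) (by omega)).2
      have ha : (0:ℝ) < Real.exp (-(K * ((N + k : ℕ) : ℝ))) := Real.exp_pos _
      have hexp : Real.exp (-(K * ((N + (k+1) : ℕ) : ℝ)))
          = Real.exp (-(K * ((N + k : ℕ) : ℝ))) * Real.exp (-K) := by
        rw [← Real.exp_add]
        congr 1
        push_cast
        ring
      have hidx : N + (k + 1) + 1 = N + k + 1 + 1 := by omega
      rw [hidx, hexp, pow_succ]
      have h2 := mul_le_mul_of_nonneg_left hstep.le ha.le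
      nlinarith [ih, h2, hx0 (N + k + 1 + 1), ha, hb0]
  have htend : Tendsto (fun n : ℕ => c / 4 * 2 ^ (n - N)) atTop atTop := by
    refine Tendsto.const_mul_atTop (by positivity) ?_
    exact (tendsto_pow_atTop_atTop_of_one_lt (one_lt_two)).comp (tendsto_sub_atTop_nat N)
  refine tendsto_atTop_mono' atTop ?_ htend
  filter_upwards [eventually_ge_atTop N] with n hn
  have hkey := key (n - N)
  rw [Nat.add_sub_cancel' hn] at hkey
  have hR2 := hRlow' n
  have hexp_pos : (0:ℝ) < Real.exp (-(K * n)) := Real.exp_pos _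
  obtain ⟨h8, hr⟩ := hN n hn
  have hx14 : x (n + 1) / 4 ≤ x (n + 1) - x n - 2 * Δ := by
    have : x n < x (n + 1) / 2 := by nlinarith [hx0 (n + 1)]
    linarith
  have hA0 : 0 ≤ x (n + 1) - x n - 2 * Δ := le_trans (le_of_lt (by exact div_pos (hx0 _) (by norm_num))) hx14
  calc c / 4 * 2 ^ (n - N) = c * 2 ^ (n - N) / 4 := by ring
    _ ≤ x (n + 1) * Real.exp (-(K * n)) / 4 := by linarith
    _ = x (n + 1) / 4 * Real.exp (-(K * n)) := by ring
    _ ≤ (x (n + 1) - x n - 2 * Δ) * R n ^ 2 :=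
        mul_le_mul hx14 hR2 hexp_pos.le hA0
end
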